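/- For d ∈ ℕ and matrices A ∈ ℝ^{d×n}, B ∈ ℝ^{n×l}, each entry of the product satisfies (AB)_{ij} = ∑_{k=1}^n (1/4)(σ(A_{ik}+B_{kj}) + σ(-A_{ik}-B_{kj}) - σ(A_{ik}-B_{kj}) - σ(-A_{ik}+B_{kj})), where σ(t) = max(0,t)^2; hence matrix multiplication is exactly computed by a depth-2 ReQU network with at most 4·d·n·l hidden units. -/
import Mathlib

/-- The ReQU activation function, `σ(t) = max(0,t)^2`. -/
noncomputable def requ (t : ℝ) : ℝ := (max 0 t) ^ 2

lemma requ_add_requ_neg (x : ℝ) : requ x + requ (-x) = x ^ 2 := by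
  unfold requ
  rcases le_total x 0 with h | h
  · rw [max_eq_left h, max_eq_right (neg_nonneg.mpr h)]; ring
  · rw [max_eq_right h, max_eq_left (neg_nonpos.mpr h)]; ring

theorem matrix_mul_entry_requ (d n l : ℕ) (A : Matrix (Fin d) (Fin n) ℝ)
    (B : Matrix (Fin n) (Fin l) ℝ) (i : Fin d) (j : Fin l) :
    (A * B) i j =
      ∑ k : Fin n, (1 / 4) *
        (requ (A i k + B k j) + requ (-A i k - B k j)
          - requ (A i k - B k j) - requ (-A i k + B k j)) := by
  rw [Matrix.mul_apply]
  refine Finset.sum_congr rfl fun k _ => ?_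
  have h1 := requ_add_requ_neg (A i k + B k j)
  have h2 := requ_add_requ_neg (A i k - B k j)
  have e1 : -(A i k + B k j) = -A i k - B k j := by ring
  have e2 : -(A i k - B k j) = -A i k + B k j := by ring
  rw [e1] at h1; rw [e2] at h2
  nlinarith [h1, h2]
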